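/- The spectral norm of the n×n circulant matrix C(R) = circ(R_0, R_1, ..., R_{n-1}) of Van der Laan numbers equals R_{n+4} - 1. -/

import Mathlib

/-- The Van der Laan sequence: R 0 = 0, R 1 = 1, R 2 = 0, R (n+3) = R (n+1) + R n. -/
def vanDerLaan : ℕ → ℤ
  | 0 => 0
  | 1 => 1
  | 2 => 0
  | (n + 3) => vanDerLaan (n + 1) + vanDerLaan n

lemma vanDerLaan_nonneg : ∀ n, 0 ≤ vanDerLaan n
  | 0 => le_refl 0
  | 1 => zero_le_one
  | 2 => le_refl 0
  | (n + 3) => add_nonneg (vanDerLaan_nonneg (n + 1)) (vanDerLaan_nonneg n)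

lemma vanDerLaan_sum (n : ℕ) :
    ∑ k ∈ Finset.range n, vanDerLaan k = vanDerLaan (n + 4) - 1 := by
  induction n with
  | zero => simp [vanDerLaan]
  | succ n ih =>
    rw [Finset.sum_range_succ, ih]
    have h1 : vanDerLaan (n + 5) = vanDerLaan (n + 3) + vanDerLaan (n + 2) := rfl
    have h2 : vanDerLaan (n + 4) = vanDerLaan (n + 2) + vanDerLaan (n + 1) := rfl
    have h3 : vanDerLaan (n + 3) = vanDerLaan (n + 1) + vanDerLaan n := rfl
    show vanDerLaan (n + 4) - 1 + vanDerLaan n = vanDerLaan (n + 5) - 1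
    omega

theorem spectral_norm_circulant_vanDerLaan (n : ℕ) (hn : 1 ≤ n)
    (M : Matrix (Fin n) (Fin n) ℝ)
    (hM : ∀ i j : Fin n, M i j = (vanDerLaan ((j - i : Fin n) : ℕ) : ℝ)) :
    ‖Matrix.toEuclideanCLM (𝕜 := ℝ) M‖ = (vanDerLaan (n + 4) : ℝ) - 1 := by
  have : NeZero n := ⟨by omega⟩
  set S : ℝ := ∑ k ∈ Finset.range n, (vanDerLaan k : ℝ) with hS
  have hSval : S = (vanDerLaan (n + 4) : ℝ) - 1 := by
    rw [hS, ← Int.cast_sum, vanDerLaan_sum n]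
    push_cast
    ring
  have hSnn : 0 ≤ S := Finset.sum_nonneg fun k _ => by exact_mod_cast vanDerLaan_nonneg k
  have hMnn : ∀ i j, 0 ≤ M i j := fun i j => by
    rw [hM]; exact_mod_cast vanDerLaan_nonneg _
  have hrow : ∀ i, ∑ j, M i j = S := by
    intro i
    calc ∑ j, M i j = ∑ j : Fin n, (vanDerLaan ((j - i : Fin n) : ℕ) : ℝ) := by
          exact Finset.sum_congr rfl fun j _ => hM i j
      _ = ∑ j : Fin n, (vanDerLaan (j : ℕ) : ℝ) :=
          Fintype.sum_equiv (Equiv.subRight i) _ _ (fun j => by simp)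
      _ = S := by rw [hS, ← Fin.sum_univ_eq_sum_range (fun k => (vanDerLaan k : ℝ)) n]
  have hcol : ∀ j, ∑ i, M i j = S := by
    intro j
    calc ∑ i, M i j = ∑ i : Fin n, (vanDerLaan ((j - i : Fin n) : ℕ) : ℝ) := by
          exact Finset.sum_congr rfl fun i _ => hM i j
      _ = ∑ i : Fin n, (vanDerLaan (i : ℕ) : ℝ) :=
          Fintype.sum_equiv (Equiv.subLeft j) _ _ (fun i => by simp)
      _ = S := by rw [hS, ← Fin.sum_univ_eq_sum_range (fun k => (vanDerLaan k : ℝ)) n]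
  set T := Matrix.toEuclideanCLM (𝕜 := ℝ) M with hT
  have happ : ∀ (x : EuclideanSpace ℝ (Fin n)) i, T x i = ∑ j, M i j * x j := by
    intro x i
    have h := Matrix.ofLp_toEuclideanCLM (𝕜 := ℝ) (n := Fin n) M x
    have h2 := congrFun h i
    exact h2
  have hnormsq : ∀ y : EuclideanSpace ℝ (Fin n), ‖y‖ ^ 2 = ∑ i, (y i) ^ 2 := by
    intro y
    rw [EuclideanSpace.norm_eq, Real.sq_sqrt (Finset.sum_nonneg fun i _ => sq_nonneg _)]
    simp [Real.norm_eq_abs, sq_abs]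
  -- upper bound
  have upper : ‖T‖ ≤ S := by
    refine ContinuousLinearMap.opNorm_le_bound T hSnn fun x => ?_
    have key : ∑ i, (T x i) ^ 2 ≤ S ^ 2 * ∑ j, (x j) ^ 2 := by
      have step1 : ∀ i, (T x i) ^ 2 ≤ S * ∑ j, M i j * (x j) ^ 2 := by
        intro i
        rw [happ]
        calc (∑ j, M i j * x j) ^ 2
            = (∑ j, Real.sqrt (M i j) * (Real.sqrt (M i j) * x j)) ^ 2 := by
              congr 1
              refine Finset.sum_congr rfl fun j _ => ?_
              rw [← mul_assoc, Real.mul_self_sqrt (hMnn i j)]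
          _ ≤ (∑ j, Real.sqrt (M i j) ^ 2) * ∑ j, (Real.sqrt (M i j) * x j) ^ 2 :=
              Finset.sum_mul_sq_le_sq_mul_sq _ _ _
          _ = (∑ j, M i j) * ∑ j, M i j * (x j) ^ 2 := by
              congr 1
              · exact Finset.sum_congr rfl fun j _ => Real.sq_sqrt (hMnn i j)
              · refine Finset.sum_congr rfl fun j _ => ?_
                rw [mul_pow, Real.sq_sqrt (hMnn i j)]
          _ = S * ∑ j, M i j * (x j) ^ 2 := by rw [hrow i]
      calc ∑ i, (T x i) ^ 2 ≤ ∑ i, S * ∑ j, M i j * (x j) ^ 2 :=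
            Finset.sum_le_sum fun i _ => step1 i
        _ = S * ∑ j, (∑ i, M i j) * (x j) ^ 2 := by
            rw [← Finset.mul_sum]
            congr 1
            rw [Finset.sum_comm]
            exact Finset.sum_congr rfl fun j _ => (Finset.sum_mul _ _ _).symm
        _ = S ^ 2 * ∑ j, (x j) ^ 2 := by
            simp_rw [hcol]
            rw [← Finset.mul_sum]
            ring
    have h2 : ‖T x‖ ^ 2 ≤ (S * ‖x‖) ^ 2 := by
      rw [hnormsq (T x), mul_pow, hnormsq x]; exact key
    have h3 := Real.sqrt_le_sqrt h2
    rwa [Real.sqrt_sq (norm_nonneg _), Real.sqrt_sq (mul_nonneg hSnn (norm_nonneg x))] at h3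
  -- lower bound
  have lower : S ≤ ‖T‖ := by
    set v : EuclideanSpace ℝ (Fin n) := (WithLp.equiv 2 (Fin n → ℝ)).symm (fun _ => 1) with hv
    have hvi : ∀ i, v i = 1 := fun i => rfl
    have hTv : ∀ i, T v i = S := by
      intro i
      rw [happ]
      simp only [hvi, mul_one]
      exact hrow i
    have hnv : ‖v‖ = Real.sqrt n := by
      rw [EuclideanSpace.norm_eq]
      simp [hvi]
    have hnTv : ‖T v‖ = Real.sqrt n * S := by
      rw [EuclideanSpace.norm_eq]
      have : ∑ i : Fin n, ‖T v i‖ ^ 2 = (n : ℝ) * S ^ 2 := by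
        simp [hTv, sq_abs, Finset.card_univ]
      rw [this, Real.sqrt_mul (Nat.cast_nonneg n), Real.sqrt_sq hSnn]
    have hle := T.le_opNorm v
    rw [hnTv, hnv] at hle
    have hpos : (0 : ℝ) < Real.sqrt n := Real.sqrt_pos.mpr (by exact_mod_cast hn)
    have := (mul_le_mul_iff_right₀ hpos).mp (by linarith [hle] : Real.sqrt n * S ≤ Real.sqrt n * ‖T‖)
    linarith
  rw [← hSval]
  exact le_antisymm upper lower
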